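/- Let 𝒜 be an operator algebra with a bounded approximate unit (u_λ), and let π : 𝒜 → B(H) be a bounded algebra homomorphism into the bounded operators on a complex Hilbert space H. Then the net (π(u_λ)) converges in the strong operator topology to an idempotent q ∈ B(H) with the following properties: (1) qπ(a) = π(a)q = π(a) for all a ∈ 𝒜; (2) the range of q equals the closed linear span of {π(a)h : a ∈ 𝒜, h ∈ H}; (3) the range of 1 − q equals {h ∈ H : π(a)h = 0 for all a ∈ 𝒜}; (4) ‖q‖ ≤ ‖π‖ · sup_λ ‖u_λ‖. -/

import Mathlib

set_option synthInstance.maxHeartbeats 1000000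
set_option maxHeartbeats 1000000

open Filter Topology

/-- The restricted-norm normed-space structure on a non-unital subalgebra (found automatically
in the older Mathlib, no longer found by instance search). -/
noncomputable instance NonUnitalSubalgebra.normedSpaceOfCLM {H₀ : Type*} [NormedAddCommGroup H₀]
    [InnerProductSpace ℂ H₀] (A : NonUnitalSubalgebra ℂ (H₀ →L[ℂ] H₀)) : NormedSpace ℂ A :=
  SubmoduleClass.toNormedSpace (R := ℂ) A

/-- Let `𝒜` be an operator algebra (a norm-closed, not necessarily
unital or self-adjoint, subalgebra of the bounded operators on a complex Hilbert space `H₀`)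
with a bounded approximate unit `(u_λ)`, and let `π : 𝒜 → B(H)` be a bounded algebra
homomorphism.  Then the net `(π(u_λ))` converges in the strong operator topology to an
idempotent `q ∈ B(H)` such that:
(1) `qπ(a) = π(a)q = π(a)` for all `a ∈ 𝒜`;
(2) the range of `q` equals the closed linear span of `{π(a)h : a ∈ 𝒜, h ∈ H}`;
(3) the range of `1 − q` equals `{h ∈ H : π(a)h = 0 for all a ∈ 𝒜}`;
(4) `‖q‖ ≤ ‖π‖ · C` for any bound `C` on the norms of the `u_λ`. -/
theorem statement0
    {H₀ H : Type*} [NormedAddCommGroup H₀] [InnerProductSpace ℂ H₀] [CompleteSpace H₀]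
    [NormedAddCommGroup H] [InnerProductSpace ℂ H] [CompleteSpace H]
    -- the operator algebra 𝒜 : a closed (not necessarily unital) subalgebra of B(H₀)
    (A : NonUnitalSubalgebra ℂ (H₀ →L[ℂ] H₀)) (hA : IsClosed (A : Set (H₀ →L[ℂ] H₀)))
    -- a bounded approximate unit (u_λ), indexed by a directed set ι
    {ι : Type*} [Preorder ι] [IsDirected ι (· ≤ ·)] [Nonempty ι]
    (u : ι → A) (C : ℝ) (huC : ∀ l, ‖u l‖ ≤ C)
    (hu_left : ∀ a : A, Tendsto (fun l => ‖u l * a - a‖) atTop (𝓝 0))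
    (hu_right : ∀ a : A, Tendsto (fun l => ‖a * u l - a‖) atTop (𝓝 0))
    -- a bounded (continuous linear, multiplicative) representation π : 𝒜 → B(H)
    (π : A →L[ℂ] (H →L[ℂ] H)) (hπ : ∀ a b : A, π (a * b) = π a * π b) :
    ∃ q : H →L[ℂ] H,
      -- strong operator convergence of π(u_λ) to q
      (∀ h : H, Tendsto (fun l => π (u l) h) atTop (𝓝 (q h))) ∧
      -- q is an idempotent
      q * q = q ∧
      -- (1)
      (∀ a : A, q * π a = π a ∧ π a * q = π a) ∧
      -- (2)
      Set.range q =
        closure ((Submodule.span ℂ {x : H | ∃ (a : A) (h : H), π a h = x} : Submodule ℂ H) : Set H) ∧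
      -- (3)
      Set.range ((1 : H →L[ℂ] H) - q) = {h : H | ∀ a : A, π a h = 0} ∧
      -- (4)
      ‖q‖ ≤ ‖π‖ * C := by
  classical
  have hC0 : 0 ≤ C := le_trans (norm_nonneg _) (huC (Classical.arbitrary ι))
  set M : ℝ := ‖π‖ * C with hMdef
  have hM0 : 0 ≤ M := by positivity
  have hbound : ∀ l, ‖π (u l)‖ ≤ M := fun l =>
    le_trans (π.le_opNorm _) (mul_le_mul_of_nonneg_left (huC l) (norm_nonneg _))
  -- operator norm convergence
  have hmul_left : ∀ a : A, Tendsto (fun l => ‖π (u l * a) - π a‖) atTop (𝓝 0) := by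
    intro a
    refine squeeze_zero (fun l => norm_nonneg _) (fun l => ?_)
      (by simpa using (hu_left a).const_mul ‖π‖)
    rw [← map_sub]
    exact π.le_opNorm _
  have hmul_right : ∀ a : A, Tendsto (fun l => ‖π (a * u l) - π a‖) atTop (𝓝 0) := by
    intro a
    refine squeeze_zero (fun l => norm_nonneg _) (fun l => ?_)
      (by simpa using (hu_right a).const_mul ‖π‖)
    rw [← map_sub]
    exact π.le_opNorm _
  set S : Submodule ℂ H :=
    (Submodule.span ℂ {x : H | ∃ (a : A) (h : H), π a h = x}).topologicalClosure with hSdef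
  have hSclosed : IsClosed (S : Set H) := Submodule.isClosed_topologicalClosure _
  haveI : CompleteSpace S := hSclosed.completeSpace_coe
  have hScoe : (S : Set H) =
      closure ((Submodule.span ℂ {x : H | ∃ (a : A) (h : H), π a h = x} : Submodule ℂ H) : Set H) :=
    rfl
  have hmemS : ∀ (a : A) (h : H), π a h ∈ S := fun a h =>
    Submodule.le_topologicalClosure _ (Submodule.subset_span ⟨a, h, rfl⟩)
  -- convergence on the span
  have hconv0 : ∀ s ∈ Submodule.span ℂ {x : H | ∃ (a : A) (h : H), π a h = x},
      Tendsto (fun l => π (u l) s) atTop (𝓝 s) := by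
    intro s hs
    induction hs using Submodule.span_induction with
    | mem x hx =>
      obtain ⟨a, k, rfl⟩ := hx
      have h1 : Tendsto (fun l => π (u l * a) k) atTop (𝓝 (π a k)) := by
        rw [tendsto_iff_norm_sub_tendsto_zero]
        refine squeeze_zero (fun l => norm_nonneg _) (fun l => ?_)
          (by simpa using (hmul_left a).mul_const ‖k‖)
        calc ‖π (u l * a) k - π a k‖ = ‖(π (u l * a) - π a) k‖ := by
              simp [ContinuousLinearMap.sub_apply]
          _ ≤ ‖π (u l * a) - π a‖ * ‖k‖ := (π (u l * a) - π a).le_opNorm k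
      refine h1.congr fun l => ?_
      rw [hπ]; rfl
    | zero => simpa using tendsto_const_nhds
    | add x y _ _ hx hy => simpa using (hx.add hy)
    | smul c x _ hx => simpa using (hx.const_smul c)
  -- convergence on the closure
  have hconvS : ∀ s ∈ S, Tendsto (fun l => π (u l) s) atTop (𝓝 s) := by
    intro s hs
    rw [Metric.tendsto_nhds]
    intro ε hε
    have hδ : 0 < ε / (2 * (M + 1)) := by positivity
    obtain ⟨s', hs'mem, hs'dist⟩ := Metric.mem_closure_iff.1 hs _ hδ
    have hball : ∀ᶠ l in atTop, dist (π (u l) s') s' < ε / 2 :=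
      Metric.tendsto_nhds.1 (hconv0 s' hs'mem) (ε / 2) (by positivity)
    filter_upwards [hball] with l hl
    have h1 : dist (π (u l) s) (π (u l) s') ≤ M * dist s s' := by
      rw [dist_eq_norm, dist_eq_norm, ← map_sub]
      exact le_trans ((π (u l)).le_opNorm _)
        (mul_le_mul_of_nonneg_right (hbound l) (norm_nonneg _))
    have h2 : dist s s' < ε / (2 * (M + 1)) := hs'dist
    have htri : dist (π (u l) s) s ≤ M * dist s s' + dist (π (u l) s') s' + dist s s' := by
      calc dist (π (u l) s) s ≤ dist (π (u l) s) (π (u l) s') + dist (π (u l) s') s' + dist s' s :=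
            dist_triangle4 _ _ _ _
        _ ≤ M * dist s s' + dist (π (u l) s') s' + dist s s' := by
            rw [dist_comm s' s]; gcongr
    have hfe : (M + 1) * (ε / (2 * (M + 1))) = ε / 2 := by
      field_simp
    have hprod : (M + 1) * dist s s' < (M + 1) * (ε / (2 * (M + 1))) :=
      mul_lt_mul_of_pos_left h2 (by linarith)
    nlinarith [htri, hprod, hfe, hl]
  -- the key weak-limit construction
  have key : ∀ h : H, ∃ g : H, g ∈ S ∧ ∀ a : A, π a g = π a h := by
    intro h
    set 𝒰 : Ultrafilter ι := Ultrafilter.of atTop with h𝒰def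
    have h𝒰 : (𝒰 : Filter ι) ≤ atTop := Ultrafilter.of_le _
    have hzex : ∀ w : H, ∃ z : ℂ,
        Tendsto (fun l => (inner ℂ (π (u l) h) w : ℂ)) 𝒰 (𝓝 z) := by
      intro w
      have hb : ∀ l : ι, (inner ℂ (π (u l) h) w : ℂ) ∈ Metric.closedBall (0 : ℂ) (M * ‖h‖ * ‖w‖) := by
        intro l
        rw [Metric.mem_closedBall, dist_zero_right]
        calc ‖(inner ℂ (π (u l) h) w : ℂ)‖ ≤ ‖π (u l) h‖ * ‖w‖ := norm_inner_le_norm _ _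
          _ ≤ M * ‖h‖ * ‖w‖ := by
              have := le_trans ((π (u l)).le_opNorm h)
                (mul_le_mul_of_nonneg_right (hbound l) (norm_nonneg h))
              exact mul_le_mul_of_nonneg_right this (norm_nonneg w)
      obtain ⟨z, _, hz⟩ := (isCompact_closedBall (0 : ℂ) (M * ‖h‖ * ‖w‖)).ultrafilter_le_nhds
        (𝒰.map fun l => (inner ℂ (π (u l) h) w : ℂ))
        (by rw [Ultrafilter.coe_map, Filter.le_principal_iff, Filter.mem_map]
            exact Filter.univ_mem' hb)
      refine ⟨z, ?_⟩
      rw [Filter.Tendsto, ← Ultrafilter.coe_map]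
      exact hz
    choose z hz using hzex
    have hzadd : ∀ w w' : H, z (w + w') = z w + z w' := fun w w' =>
      tendsto_nhds_unique (hz (w + w'))
        (((hz w).add (hz w')).congr fun l => (inner_add_right _ _ _).symm)
    have hzsmul : ∀ (c : ℂ) (w : H), z (c • w) = c * z w := fun c w =>
      tendsto_nhds_unique (hz (c • w))
        (((hz w).const_mul c).congr fun l => (inner_smul_right _ _ _).symm)
    have hznorm : ∀ w : H, ‖z w‖ ≤ (M * ‖h‖) * ‖w‖ := by
      intro w
      refine le_of_tendsto' (hz w).norm (fun l => ?_)
      calc ‖(inner ℂ (π (u l) h) w : ℂ)‖ ≤ ‖π (u l) h‖ * ‖w‖ := norm_inner_le_norm _ _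
        _ ≤ M * ‖h‖ * ‖w‖ := by
            have := le_trans ((π (u l)).le_opNorm h)
              (mul_le_mul_of_nonneg_right (hbound l) (norm_nonneg h))
            exact mul_le_mul_of_nonneg_right this (norm_nonneg w)
    let F : H →L[ℂ] ℂ := LinearMap.mkContinuous
      { toFun := z, map_add' := hzadd, map_smul' := hzsmul } (M * ‖h‖) hznorm
    set g : H := (InnerProductSpace.toDual ℂ H).symm F with hgdef
    have hg : ∀ w : H, Tendsto (fun l => (inner ℂ (π (u l) h) w : ℂ)) 𝒰 (𝓝 (inner ℂ g w)) := by
      intro w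
      have : (inner ℂ g w : ℂ) = F w := InnerProductSpace.toDual_symm_apply
      rw [this]
      exact hz w
    -- g ∈ S
    have hgS : g ∈ S := by
      set v : H := g - (S.orthogonalProjectionOnto g : H) with hvdef
      have hv : v ∈ Sᗮ := Submodule.sub_starProjection_mem_orthogonal (K := S) g
      have h0 : ∀ l : ι, (inner ℂ (π (u l) h) v : ℂ) = 0 := fun l =>
        Submodule.inner_right_of_mem_orthogonal (hmemS (u l) h) hv
      have : (inner ℂ g v : ℂ) = 0 :=
        tendsto_nhds_unique (hg v) (by simpa [h0] using (tendsto_const_nhds :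
          Tendsto (fun _ : ι => (0 : ℂ)) 𝒰 (𝓝 0)))
      have hPv : (inner ℂ ((S.orthogonalProjectionOnto g : H)) v : ℂ) = 0 :=
        Submodule.inner_right_of_mem_orthogonal (S.orthogonalProjectionOnto g).2 hv
      have hvv : (inner ℂ v v : ℂ) = 0 := by
        have hgv : g = (S.orthogonalProjectionOnto g : H) + v := by rw [hvdef]; abel
        rw [hgv, inner_add_left, hPv, zero_add] at this
        exact this
      have : v = 0 := inner_self_eq_zero.mp hvv
      have : g = (S.orthogonalProjectionOnto g : H) := by
        have := congrArg (fun x => x + (S.orthogonalProjectionOnto g : H)) this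
        simpa [hvdef, sub_add_cancel] using this
      rw [this]
      exact (S.orthogonalProjectionOnto g).2
    refine ⟨g, hgS, fun a => ?_⟩
    refine ext_inner_right ℂ (fun w => ?_)
    have h1 : Tendsto (fun l => (inner ℂ (π (u l) h) ((ContinuousLinearMap.adjoint (π a)) w) : ℂ))
        𝒰 (𝓝 (inner ℂ g ((ContinuousLinearMap.adjoint (π a)) w))) := hg _
    have heq : ∀ l : ι, (inner ℂ (π (u l) h) ((ContinuousLinearMap.adjoint (π a)) w) : ℂ)
        = inner ℂ (π (a * u l) h) w := by
      intro l
      rw [ContinuousLinearMap.adjoint_inner_right]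
      congr 1
      rw [hπ]
      rfl
    have h2 : Tendsto (fun l => π (a * u l) h) atTop (𝓝 (π a h)) := by
      rw [tendsto_iff_norm_sub_tendsto_zero]
      refine squeeze_zero (fun l => norm_nonneg _) (fun l => ?_)
        (by simpa using (hmul_right a).mul_const ‖h‖)
      calc ‖π (a * u l) h - π a h‖ = ‖(π (a * u l) - π a) h‖ := by
            simp [ContinuousLinearMap.sub_apply]
        _ ≤ ‖π (a * u l) - π a‖ * ‖h‖ := (π (a * u l) - π a).le_opNorm h
    have h3 : Tendsto (fun l => (inner ℂ (π (a * u l) h) w : ℂ)) 𝒰 (𝓝 (inner ℂ (π a h) w)) :=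
      ((h2.inner tendsto_const_nhds).mono_left h𝒰)
    have := tendsto_nhds_unique (h1.congr heq) h3
    rw [ContinuousLinearMap.adjoint_inner_right] at h1
    calc (inner ℂ (π a g) w : ℂ) = inner ℂ g ((ContinuousLinearMap.adjoint (π a)) w) :=
          (ContinuousLinearMap.adjoint_inner_right _ _ _).symm
      _ = inner ℂ (π a h) w := this
  have main : ∀ h : H, ∃ g : H, g ∈ S ∧ (∀ a : A, π a g = π a h) ∧
      Tendsto (fun l => π (u l) h) atTop (𝓝 g) := by
    intro h
    obtain ⟨g, hgS, hgπ⟩ := key h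
    exact ⟨g, hgS, hgπ, Tendsto.congr (fun l => hgπ (u l)) (hconvS g hgS)⟩
  choose q0 hq0S hq0π hq0T using main
  have huniq : ∀ {h g : H}, Tendsto (fun l => π (u l) h) atTop (𝓝 g) → q0 h = g :=
    fun {h g} hT => tendsto_nhds_unique (hq0T h) hT
  have hadd : ∀ x y : H, q0 (x + y) = q0 x + q0 y := by
    intro x y
    refine huniq ?_
    refine ((hq0T x).add (hq0T y)).congr fun l => ?_
    rw [← map_add]
  have hsmul : ∀ (c : ℂ) (x : H), q0 (c • x) = c • q0 x := by
    intro c x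
    refine huniq ?_
    refine ((hq0T x).const_smul c).congr fun l => ?_
    rw [← map_smul]
  have hq0bound : ∀ x : H, ‖q0 x‖ ≤ M * ‖x‖ := by
    intro x
    refine le_of_tendsto' (hq0T x).norm (fun l => ?_)
    exact le_trans ((π (u l)).le_opNorm x)
      (mul_le_mul_of_nonneg_right (hbound l) (norm_nonneg x))
  set q : H →L[ℂ] H := LinearMap.mkContinuous
    { toFun := q0, map_add' := hadd, map_smul' := hsmul } M hq0bound with hqdef
  have hqapp : ∀ x : H, q x = q0 x := fun x => rfl
  have hfix : ∀ s ∈ S, q s = s := fun s hs => huniq (hconvS s hs)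
  refine ⟨q, ?_, ?_, ?_, ?_, ?_, ?_⟩
  · intro h
    rw [hqapp]
    exact hq0T h
  · ext x
    exact hfix (q x) (hq0S x)
  · intro a
    constructor
    · ext x
      exact hfix (π a x) (hmemS a x)
    · ext x
      exact hq0π x a
  · apply Set.eq_of_subset_of_subset
    · rintro _ ⟨x, rfl⟩
      exact hq0S x
    · intro s hs
      exact ⟨s, hfix s hs⟩
  · apply Set.eq_of_subset_of_subset
    · rintro _ ⟨x, rfl⟩
      intro a
      simp only [ContinuousLinearMap.sub_apply, ContinuousLinearMap.one_apply, map_sub]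
      rw [hqapp, hq0π x a, sub_self]
    · intro x hx
      have hq0 : q x = 0 := by
        refine huniq ?_
        refine tendsto_const_nhds.congr fun l => ?_
        exact (hx (u l)).symm
      exact ⟨x, by simp [hq0]⟩
  · exact LinearMap.mkContinuous_norm_le _ hM0 _
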